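/- Define Δ(u) := log(−log u) for u ∈ (0,1) and κ_k(a,b) := (1/(b−a)) ∫_a^b Δ(u)^k du for 0 ≤ a < b ≤ 1. Suppose 0 ≤ a_j ≤ a_i < b̄_j ≤ b̄_i ≤ 1 (writing v̄ := 1 − v), and set ζ(a_i, b̄_j) := κ₁(a_i, b̄_i)² − 2·κ₁(a_i, b̄_i)·κ₁(a_j, b̄_j) + κ₂(a_j, b̄_j) and ζ(a_j, b̄_j) := κ₂(a_j, b̄_j) − κ₁(a_j, b̄_j)². Then ζ_r := ζ(a_j, b̄_j)/ζ(a_i, b̄_j) satisfies 0 < ζ_r ≤ 1. -/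

import Mathlib

open MeasureTheory Set

/-- `Δ(u) = log(-log u)`. -/
noncomputable def DeltaF (u : ℝ) : ℝ := Real.log (-Real.log u)

/-- `κ_k(a,b) = (1/(b-a)) ∫_a^b Δ(u)^k du`. -/
noncomputable def kappaF (k : ℕ) (a b : ℝ) : ℝ :=
  (b - a)⁻¹ * ∫ u in a..b, (DeltaF u) ^ k

lemma abs_log_le {x : ℝ} (hx : 0 < x) : |Real.log x| ≤ x + x⁻¹ := by
  have h1 : Real.log x ≤ x - 1 := Real.log_le_sub_one_of_pos hx
  have h2 : Real.log x⁻¹ ≤ x⁻¹ - 1 := Real.log_le_sub_one_of_pos (inv_pos.mpr hx)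
  rw [Real.log_inv] at h2
  have hxi : 0 < x⁻¹ := inv_pos.mpr hx
  rw [abs_le]; constructor <;> linarith

lemma sq_log_le {x : ℝ} (hx : 0 < x) :
    (Real.log x) ^ 2 ≤ 16 * (Real.sqrt x + 2 + (Real.sqrt x)⁻¹) := by
  set s := Real.sqrt (Real.sqrt x) with hs
  have hs0 : 0 < s := Real.sqrt_pos.mpr (Real.sqrt_pos.mpr hx)
  have hlog : Real.log x = 4 * Real.log s := by
    rw [hs, Real.log_sqrt (Real.sqrt_nonneg x), Real.log_sqrt hx.le]; ring
  have h1 : |Real.log s| ≤ s + s⁻¹ := abs_log_le hs0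
  have h2 : (Real.log s) ^ 2 ≤ (s + s⁻¹) ^ 2 := by
    rw [← sq_abs]
    exact pow_le_pow_left₀ (abs_nonneg _) h1 2
  have hs2 : s ^ 2 = Real.sqrt x := Real.sq_sqrt (Real.sqrt_nonneg x)
  have h3 : (s + s⁻¹) ^ 2 = s ^ 2 + 2 + (s ^ 2)⁻¹ := by
    field_simp; ring
  calc (Real.log x) ^ 2 = 16 * (Real.log s) ^ 2 := by rw [hlog]; ring
    _ ≤ 16 * (s + s⁻¹) ^ 2 := by linarith
    _ = 16 * (Real.sqrt x + 2 + (Real.sqrt x)⁻¹) := by rw [h3, hs2]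

lemma le_neg_log {u : ℝ} (hu : 0 < u) : 1 - u ≤ -Real.log u := by
  have := Real.log_le_sub_one_of_pos hu; linarith

lemma neg_log_le {u : ℝ} (hu : 0 < u) : -Real.log u ≤ 2 * (Real.sqrt u)⁻¹ := by
  have hsp : 0 < Real.sqrt u := Real.sqrt_pos.mpr hu
  have h1 : Real.log (Real.sqrt u)⁻¹ ≤ (Real.sqrt u)⁻¹ - 1 :=
    Real.log_le_sub_one_of_pos (inv_pos.mpr hsp)
  rw [Real.log_inv, Real.log_sqrt hu.le] at h1
  have : 0 < (Real.sqrt u)⁻¹ := inv_pos.mpr hsp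
  linarith

lemma measurable_DeltaF : Measurable DeltaF :=
  Real.measurable_log.comp Real.measurable_log.neg

/-- The dominating function for `Δ(u)²` on `(0,1)`. -/
noncomputable def gDom (u : ℝ) : ℝ :=
  16 * (Real.sqrt 2 * u ^ (-(4:ℝ)⁻¹)) + 32 + 16 * (1 - u) ^ (-(2:ℝ)⁻¹)

lemma deltaF_sq_le_gDom {u : ℝ} (hu : u ∈ Ioo (0:ℝ) 1) : (DeltaF u) ^ 2 ≤ gDom u := by
  obtain ⟨hu0, hu1⟩ := hu
  have hx : 0 < -Real.log u := by
    have := Real.log_neg hu0 hu1; linarith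
  have h1 : (DeltaF u) ^ 2 ≤ 16 * (Real.sqrt (-Real.log u) + 2 + (Real.sqrt (-Real.log u))⁻¹) :=
    sq_log_le hx
  have h2 : Real.sqrt (-Real.log u) ≤ Real.sqrt 2 * u ^ (-(4:ℝ)⁻¹) := by
    calc Real.sqrt (-Real.log u) ≤ Real.sqrt (2 * (Real.sqrt u)⁻¹) :=
          Real.sqrt_le_sqrt (neg_log_le hu0)
      _ = Real.sqrt 2 * u ^ (-(4:ℝ)⁻¹) := by
          rw [Real.sqrt_mul (by norm_num)]
          congr 1
          rw [Real.sqrt_inv, show Real.sqrt u = u ^ ((2:ℝ)⁻¹) by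
              rw [Real.sqrt_eq_rpow]; norm_num,
            Real.sqrt_eq_rpow, ← Real.rpow_mul hu0.le, ← Real.rpow_neg hu0.le]
          norm_num
  have h3 : (Real.sqrt (-Real.log u))⁻¹ ≤ (1 - u) ^ (-(2:ℝ)⁻¹) := by
    have h1u : (0:ℝ) < 1 - u := by linarith
    have hge : Real.sqrt (1 - u) ≤ Real.sqrt (-Real.log u) :=
      Real.sqrt_le_sqrt (le_neg_log hu0)
    have hpos : 0 < Real.sqrt (1 - u) := Real.sqrt_pos.mpr h1u
    calc (Real.sqrt (-Real.log u))⁻¹ ≤ (Real.sqrt (1 - u))⁻¹ :=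
          inv_anti₀ hpos hge
      _ = (1 - u) ^ (-(2:ℝ)⁻¹) := by
          rw [Real.sqrt_eq_rpow, ← Real.rpow_neg h1u.le]
          norm_num
  unfold gDom
  linarith

lemma integrableOn_gDom : IntegrableOn gDom (Ioo (0:ℝ) 1) volume := by
  have h1 : IntegrableOn (fun u : ℝ => u ^ (-(4:ℝ)⁻¹)) (Ioo (0:ℝ) 1) volume :=
    ((intervalIntegral.intervalIntegrable_rpow' (by norm_num)).1).mono_set Ioo_subset_Ioc_self
  have h3 : IntegrableOn (fun u : ℝ => (1 - u) ^ (-(2:ℝ)⁻¹)) (Ioo (0:ℝ) 1) volume := by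
    have h := (intervalIntegral.intervalIntegrable_rpow' (r := -(2:ℝ)⁻¹) (by norm_num)
      (a := 0) (b := 1)).comp_sub_left 1
    simp only [sub_zero, sub_self] at h
    exact (h.symm.1).mono_set Ioo_subset_Ioc_self
  have hconst : IntegrableOn (fun _ : ℝ => (32:ℝ)) (Ioo (0:ℝ) 1) volume := by
    apply (integrableOn_const_iff).mpr
    right
    simp [Real.volume_Ioo]
  exact (((h1.const_mul (Real.sqrt 2)).const_mul 16).add hconst).add (h3.const_mul 16)

lemma integrableOn_DeltaF_sq : IntegrableOn (fun u => (DeltaF u) ^ 2) (Ioc (0:ℝ) 1) volume := by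
  rw [integrableOn_Ioc_iff_integrableOn_Ioo]
  apply Integrable.mono integrableOn_gDom
    ((measurable_DeltaF.pow_const 2).aestronglyMeasurable)
  rw [ae_restrict_iff' measurableSet_Ioo]
  filter_upwards with u hu
  have h := deltaF_sq_le_gDom hu
  rw [Real.norm_eq_abs, Real.norm_eq_abs, abs_of_nonneg (sq_nonneg _)]
  exact h.trans (le_abs_self _)

lemma integrableOn_DeltaF_sq' {a c : ℝ} (ha : 0 ≤ a) (hc : c ≤ 1) :
    IntegrableOn (fun u => (DeltaF u) ^ 2) (Ioc a c) volume :=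
  integrableOn_DeltaF_sq.mono_set (Ioc_subset_Ioc ha hc)

lemma integrableOn_DeltaF {a c : ℝ} (ha : 0 ≤ a) (hc : c ≤ 1) :
    IntegrableOn DeltaF (Ioc a c) volume := by
  have hg : IntegrableOn (fun u => (DeltaF u) ^ 2 + 1) (Ioc a c) volume :=
    (integrableOn_DeltaF_sq' ha hc).add ((integrableOn_const_iff).mpr (Or.inr (by simp [Real.volume_Ioc])))
  apply Integrable.mono hg measurable_DeltaF.aestronglyMeasurable
  filter_upwards with u
  rw [Real.norm_eq_abs, Real.norm_eq_abs]
  have h1 : |DeltaF u| ≤ (DeltaF u) ^ 2 + 1 := by nlinarith [sq_abs (DeltaF u), abs_nonneg (DeltaF u)]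
  exact h1.trans (le_abs_self _)

lemma var_pos {a c : ℝ} (ha : 0 ≤ a) (hac : a < c) (hc : c ≤ 1) :
    0 < kappaF 2 a c - (kappaF 1 a c) ^ 2 := by
  have hca : (0:ℝ) < c - a := by linarith
  have hΔ2 := integrableOn_DeltaF_sq' ha hc
  have hΔ := integrableOn_DeltaF ha hc
  set m := kappaF 1 a c with hm
  set I1 := ∫ u in Set.Ioc a c, DeltaF u with hI1
  set I2 := ∫ u in Set.Ioc a c, (DeltaF u) ^ 2 with hI2
  have hmI : m = (c - a)⁻¹ * I1 := by
    rw [hm, kappaF, intervalIntegral.integral_of_le hac.le]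
    simp [hI1]
  -- integrability of (Δ - m)^2
  have hfeq : (fun u => (DeltaF u - m) ^ 2)
      = fun u => ((DeltaF u) ^ 2 - 2 * m * DeltaF u) + m ^ 2 := by
    funext u; ring
  have hconst : IntegrableOn (fun _ : ℝ => m ^ 2) (Ioc a c) volume :=
    (integrableOn_const_iff).mpr (Or.inr (by simp [Real.volume_Ioc]))
  have hf : IntegrableOn (fun u => (DeltaF u - m) ^ 2) (Ioc a c) volume := by
    rw [hfeq]; exact (hΔ2.sub (hΔ.const_mul (2 * m))).add hconst
  -- positivity of ∫ (Δ - m)^2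
  have hpos : 0 < ∫ u in Set.Ioc a c, (DeltaF u - m) ^ 2 := by
    rw [setIntegral_pos_iff_support_of_nonneg_ae
      (Filter.Eventually.of_forall fun u => sq_nonneg _) hf]
    set u₀ := Real.exp (-Real.exp m) with hu₀
    have hsub : Ioo a c \ {u₀} ⊆ Function.support (fun u => (DeltaF u - m) ^ 2) ∩ Ioc a c := by
      rintro u ⟨hu, hne⟩
      refine ⟨?_, Ioo_subset_Ioc_self hu⟩
      simp only [Function.mem_support]
      intro hzero
      have hΔm : DeltaF u = m := by nlinarith [sq_nonneg (DeltaF u - m)]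
      have hu0 : 0 < u := lt_of_le_of_lt ha hu.1
      have hu1 : u < 1 := lt_of_lt_of_le hu.2 hc
      have hlx : 0 < -Real.log u := by have := Real.log_neg hu0 hu1; linarith
      have : -Real.log u = Real.exp m := by
        rw [← hΔm, DeltaF, Real.exp_log hlx]
      have : u = u₀ := by
        rw [hu₀, ← this]
        rw [neg_neg, Real.exp_log hu0]
      exact hne (by simpa using this)
    refine lt_of_lt_of_le ?_ (measure_mono hsub)
    rw [measure_diff_null (measure_singleton u₀), Real.volume_Ioo]
    exact ENNReal.ofReal_pos.mpr hca
  -- expand the integral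
  have hsubint : IntegrableOn (fun u => (DeltaF u) ^ 2 - 2 * m * DeltaF u) (Ioc a c) volume :=
    hΔ2.sub (hΔ.const_mul (2 * m))
  have hint : ∫ u in Set.Ioc a c, (DeltaF u - m) ^ 2
      = I2 - 2 * m * I1 + (c - a) * m ^ 2 := by
    rw [hfeq, integral_add hsubint hconst,
      integral_sub hΔ2 (hΔ.const_mul (2 * m)), integral_const_mul, setIntegral_const,
      Real.volume_real_Ioc, max_eq_left hca.le, ← hI1, ← hI2, smul_eq_mul]
  rw [hint] at hpos
  have hI1m : I1 = (c - a) * m := by rw [hmI]; field_simp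
  rw [hI1m] at hpos
  have h2 : 0 < I2 - (c - a) * m ^ 2 := by nlinarith
  have h3 : kappaF 2 a c = (c - a)⁻¹ * I2 := by
    rw [kappaF, intervalIntegral.integral_of_le hac.le, hI2]
  have h4 : (c - a)⁻¹ * ((c - a) * m ^ 2) = m ^ 2 := by field_simp
  have h5 := mul_pos (inv_pos.mpr hca) h2
  rw [mul_sub, h4] at h5
  rw [h3]
  linarith

/-- The ratio `ζ_r = ζ(a_j,b̄_j)/ζ(a_i,b̄_j)` satisfies `0 < ζ_r ≤ 1` under the
trimming inequality `0 ≤ a_j ≤ a_i < b̄_j ≤ b̄_i ≤ 1`. -/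
theorem zeta_ratio_mem_Ioc (aj ai bj bi : ℝ)
    (h0 : 0 ≤ aj) (h1 : aj ≤ ai) (h2 : ai < 1 - bj) (h3 : 1 - bj ≤ 1 - bi)
    (h4 : 1 - bi ≤ 1)
    (ζij ζjj ζr : ℝ)
    (hζij : ζij = (kappaF 1 ai (1 - bi)) ^ 2
        - 2 * kappaF 1 ai (1 - bi) * kappaF 1 aj (1 - bj)
        + kappaF 2 aj (1 - bj))
    (hζjj : ζjj = kappaF 2 aj (1 - bj) - (kappaF 1 aj (1 - bj)) ^ 2)
    (hζr : ζr = ζjj / ζij) :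
    0 < ζr ∧ ζr ≤ 1 := by
  have hjj : 0 < ζjj := by
    rw [hζjj]
    exact var_pos h0 (lt_of_le_of_lt h1 h2) (le_trans h3 h4)
  have hle : ζjj ≤ ζij := by
    rw [hζij, hζjj]
    nlinarith [sq_nonneg (kappaF 1 ai (1 - bi) - kappaF 1 aj (1 - bj))]
  have hij : 0 < ζij := lt_of_lt_of_le hjj hle
  rw [hζr]
  exact ⟨div_pos hjj hij, (div_le_one hij).mpr hle⟩
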